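/- Let x* be a basic optimal solution of the linear relaxation LR of the set-covering formulation (variables x^k_S ≥ 0 over pairs (S,k) with S a nonempty stable set of G_k; constraints Σ_{(S,k): v∈S} x^k_S ≥ 1 for each vertex v and Σ_{S} x^k_S ≤ m(k) for each color k). If x* has some fractional component, then there exists a pair (S, k) with |S| ≥ 2 such that x*^k_S is fractional (i.e., 0 < x*^k_S < 1 is not integral). -/

import Mathlib

lemma sum_int_aux {ι : Type*} (s : Finset ι) (f : ι → ℝ)
    (h : ∀ i ∈ s, ∃ z : ℤ, f i = z) : ∃ z : ℤ, ∑ i ∈ s, f i = z := by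
  classical
  induction s using Finset.induction with
  | empty => exact ⟨0, by simp⟩
  | insert a s hx ih =>
    obtain ⟨z1, hz1⟩ := h _ (Finset.mem_insert_self _ _)
    obtain ⟨z2, hz2⟩ := ih (fun i hi => h i (Finset.mem_insert_of_mem hi))
    exact ⟨z1 + z2, by rw [Finset.sum_insert hx, hz1, hz2]; push_cast; ring⟩

lemma two_card_le_aux {ι α : Type*} [Fintype ι] [DecidableEq ι] [DecidableEq α]
    (r : ι → α) (A : Finset α)
    (hA : ∀ a ∈ A, 2 ≤ (Finset.univ.filter (fun i => r i = a)).card) :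
    2 * A.card ≤ Fintype.card ι ∧
      (2 * A.card = Fintype.card ι → ∀ i, r i ∈ A) := by
  classical
  have hdisj : ∀ a ∈ A, ∀ b ∈ A, a ≠ b →
      Disjoint (Finset.univ.filter (fun i => r i = a))
        (Finset.univ.filter (fun i => r i = b)) := by
    intro a _ b _ hab
    refine Finset.disjoint_left.2 ?_
    intro i hi hib
    simp only [Finset.mem_filter] at hi hib
    exact hab (hi.2 ▸ hib.2 ▸ rfl)
  have hcardU : (A.biUnion (fun a => Finset.univ.filter (fun i => r i = a))).card
      = ∑ a ∈ A, (Finset.univ.filter (fun i => r i = a)).card :=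
    Finset.card_biUnion hdisj
  have hsum : 2 * A.card ≤ ∑ a ∈ A, (Finset.univ.filter (fun i => r i = a)).card := by
    calc 2 * A.card = ∑ _a ∈ A, 2 := by rw [Finset.sum_const]; ring
    _ ≤ _ := Finset.sum_le_sum hA
  have hle : (A.biUnion (fun a => Finset.univ.filter (fun i => r i = a))).card
      ≤ Fintype.card ι := by
    simpa using Finset.card_le_card (Finset.subset_univ _)
  constructor
  · omega
  · intro heq i
    have hcard : (A.biUnion (fun a => Finset.univ.filter (fun i => r i = a))).card
        = Fintype.card ι := by omega
    have : (A.biUnion (fun a => Finset.univ.filter (fun i => r i = a))) = Finset.univ :=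
      Finset.eq_univ_of_card _ hcard
    have hi : i ∈ A.biUnion (fun a => Finset.univ.filter (fun i => r i = a)) := by
      rw [this]; exact Finset.mem_univ i
    obtain ⟨a, haA, hia⟩ := Finset.mem_biUnion.1 hi
    simp only [Finset.mem_filter] at hia
    exact hia.2 ▸ haA
open Module

lemma exists_kernel_vec {ι α β : Type*} [Fintype ι] [Nonempty ι]
    [DecidableEq α] [DecidableEq β]
    (r1 : ι → α) (r2 : ι → β) (A : Finset α) (B : Finset β)
    (hA : ∀ a ∈ A, 2 ≤ (Finset.univ.filter (fun i => r1 i = a)).card)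
    (hB : ∀ b ∈ B, 2 ≤ (Finset.univ.filter (fun i => r2 i = b)).card) :
    ∃ d : ι → ℝ, d ≠ 0 ∧
      (∀ a ∈ A, ∑ i, (if r1 i = a then d i else 0) = 0) ∧
      (∀ b ∈ B, ∑ i, (if r2 i = b then d i else 0) = 0) := by
  classical
  set φ : (ι → ℝ) →ₗ[ℝ] ((↥A → ℝ) × (↥B → ℝ)) :=
    { toFun := fun d =>
        (fun a => ∑ i, if r1 i = (a : α) then d i else 0,
         fun b => ∑ i, if r2 i = (b : β) then d i else 0),
      map_add' := by
        intro d e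
        refine Prod.ext ?_ ?_ <;> funext j <;>
          · simp only [Prod.fst_add, Prod.snd_add, Pi.add_apply, ← Finset.sum_add_distrib]
            exact Finset.sum_congr rfl fun i _ => by split <;> simp
      map_smul' := by
        intro c d
        refine Prod.ext ?_ ?_ <;> funext j <;>
          · simp only [RingHom.id_apply, Prod.smul_fst, Prod.smul_snd, Pi.smul_apply,
              smul_eq_mul, Finset.mul_sum]
            exact Finset.sum_congr rfl fun i _ => by split <;> simp } with hφ
  have hninj : ¬ Function.Injective φ := by
    intro hinj
    have h1 := two_card_le_aux r1 A hA
    have h2 := two_card_le_aux r2 B hB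
    have hle : Fintype.card ι ≤ A.card + B.card := by
      have hr := LinearMap.finrank_le_finrank_of_injective hinj
      simpa [Module.finrank_pi, Module.finrank_prod, Fintype.card_coe] using hr
    have hAeq : 2 * A.card = Fintype.card ι := by omega
    have hBeq : 2 * B.card = Fintype.card ι := by omega
    have hall1 : ∀ i, r1 i ∈ A := h1.2 hAeq
    have hall2 : ∀ i, r2 i ∈ B := h2.2 hBeq
    -- the functional ψ
    set ψ : ((↥A → ℝ) × (↥B → ℝ)) →ₗ[ℝ] ℝ :=
      { toFun := fun q => (∑ a, q.1 a) - (∑ b, q.2 b),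
        map_add' := by intro q r; simp [Finset.sum_add_distrib]; ring
        map_smul' := by intro c q; simp [Finset.mul_sum, mul_sub] } with hψ
    have hψφ : ∀ d, ψ (φ d) = 0 := by
      intro d
      have e1 : (∑ a : ↥A, ∑ i, if r1 i = (a : α) then d i else 0) = ∑ i, d i := by
        rw [Finset.sum_comm]
        refine Finset.sum_congr rfl fun i _ => ?_
        rw [Finset.sum_coe_sort A (fun a => if r1 i = a then d i else 0),
          Finset.sum_ite_eq A (r1 i) (fun _ => d i)]
        simp [hall1 i]
      have e2 : (∑ b : ↥B, ∑ i, if r2 i = (b : β) then d i else 0) = ∑ i, d i := by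
        rw [Finset.sum_comm]
        refine Finset.sum_congr rfl fun i _ => ?_
        rw [Finset.sum_coe_sort B (fun b => if r2 i = b then d i else 0),
          Finset.sum_ite_eq B (r2 i) (fun _ => d i)]
        simp [hall2 i]
      have hfst : (φ d).1 = fun a : ↥A => ∑ i, if r1 i = (a : α) then d i else 0 := rfl
      have hsnd : (φ d).2 = fun b : ↥B => ∑ i, if r2 i = (b : β) then d i else 0 := rfl
      show (∑ a : ↥A, (φ d).1 a) - (∑ b : ↥B, (φ d).2 b) = (0:ℝ)
      rw [hfst, hsnd]
      rw [e1, e2, sub_self]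
    -- A is nonempty, ψ is surjective
    obtain ⟨i0⟩ := ‹Nonempty ι›
    have hAne : (0:ℕ) < A.card := Finset.card_pos.2 ⟨r1 i0, hall1 i0⟩
    have hψsurj : Function.Surjective ψ := by
      intro c
      refine ⟨((fun _ => c / A.card), 0), ?_⟩
      show (∑ _a : ↥A, c / A.card) - (∑ _b : ↥B, (0:ℝ)) = c
      rw [Finset.sum_const, Finset.sum_const]
      simp only [smul_eq_mul, Finset.card_univ, Fintype.card_coe, nsmul_eq_mul, smul_zero, sub_zero]
      field_simp [Nat.cast_ne_zero.2 (by omega : A.card ≠ 0)]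
    have hrange : LinearMap.range ψ = ⊤ := LinearMap.range_eq_top.2 hψsurj
    have hrk : finrank ℝ ↥(LinearMap.range ψ) = 1 := by
      rw [hrange]; simpa using finrank_top ℝ ℝ
    have hsum := LinearMap.finrank_range_add_finrank_ker ψ
    rw [hrk] at hsum
    have hker : finrank ℝ ↥(LinearMap.ker ψ) + 1 = A.card + B.card := by
      have : finrank ℝ ((↥A → ℝ) × (↥B → ℝ)) = A.card + B.card := by
        simp [Module.finrank_prod, Module.finrank_pi, Fintype.card_coe]
      omega
    -- restrict φ to ker ψ
    have hmem : ∀ d, φ d ∈ LinearMap.ker ψ := fun d => LinearMap.mem_ker.2 (hψφ d)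
    set φ' := φ.codRestrict (LinearMap.ker ψ) hmem with hφ'
    have hinj' : Function.Injective φ' := by
      intro u v huv
      apply hinj
      have := congrArg (Subtype.val) huv
      simpa [hφ', LinearMap.codRestrict] using this
    have hle' : Fintype.card ι ≤ finrank ℝ ↥(LinearMap.ker ψ) := by
      have hr := LinearMap.finrank_le_finrank_of_injective hinj'
      simpa [Module.finrank_pi] using hr
    omega
  rw [← LinearMap.ker_eq_bot] at hninj
  obtain ⟨d, hdker, hdne⟩ := (Submodule.ne_bot_iff _).1 hninj
  refine ⟨d, hdne, ?_, ?_⟩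
  · intro a ha
    have := congrFun (congrArg Prod.fst (LinearMap.mem_ker.1 hdker)) ⟨a, ha⟩
    simpa [hφ] using this
  · intro b hb
    have := congrFun (congrArg Prod.snd (LinearMap.mem_ker.1 hdker)) ⟨b, hb⟩
    simpa [hφ] using this
/-- Index set of the set-covering LP: pairs `(S, k)` where `S` is a nonempty stable set of
the color graph `G_k` (the subgraph of `G` induced by `V_k`). -/
abbrev StabIdx {V K : Type*} (G : SimpleGraph V) (Vset : K → Finset V) :=
  {p : Finset V × K // p.1.Nonempty ∧ p.1 ⊆ Vset p.2 ∧
    ∀ a ∈ p.1, ∀ b ∈ p.1, ¬ G.Adj a b}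

noncomputable instance {V K : Type*} [Fintype V] [Fintype K] {G : SimpleGraph V}
    {Vset : K → Finset V} : Fintype (StabIdx G Vset) := Fintype.ofFinite _

/-- Feasible region of the LP relaxation `LR` of the set-covering formulation. -/
def scFeas {V K : Type*} [Fintype V] [DecidableEq V] [Fintype K] [DecidableEq K]
    (G : SimpleGraph V) (Vset : K → Finset V) (m : K → ℕ) :
    Set (StabIdx G Vset → ℝ) :=
  {x | (∀ p, 0 ≤ x p) ∧
       (∀ v : V, 1 ≤ ∑ p : StabIdx G Vset, if v ∈ p.1.1 then x p else 0) ∧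
       (∀ k : K, (∑ p : StabIdx G Vset, if p.1.2 = k then x p else 0) ≤ (m k : ℝ))}

/-- Objective of `LR`: `∑ w_k x^k_S`. -/
noncomputable def scObj {V K : Type*} [Fintype V] [Fintype K]
    (G : SimpleGraph V) (Vset : K → Finset V) (w : K → ℕ)
    (x : StabIdx G Vset → ℝ) : ℝ :=
  ∑ p : StabIdx G Vset, (w p.1.2 : ℝ) * x p

/-- A basic (extreme-point) optimal solution of `LR` with some fractional component has a
fractional component indexed by a stable set of size at least 2. -/
theorem stmt_18 {V K : Type*} [Fintype V] [DecidableEq V] [Fintype K] [DecidableEq K]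
    (G : SimpleGraph V) (Vset : K → Finset V) (m : K → ℕ) (w : K → ℕ)
    (x : StabIdx G Vset → ℝ)
    (hfeas : x ∈ scFeas G Vset m)
    (hbasic : x ∈ Set.extremePoints ℝ (scFeas G Vset m))
    (hopt : ∀ y ∈ scFeas G Vset m, scObj G Vset w x ≤ scObj G Vset w y)
    (hfrac : ∃ p : StabIdx G Vset, ¬ ∃ z : ℤ, x p = (z : ℝ)) :
    ∃ p : StabIdx G Vset, 2 ≤ p.1.1.card ∧ ¬ ∃ z : ℤ, x p = (z : ℝ) := by
  classical
  by_contra hcon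
  push_neg at hcon
  obtain ⟨hnn, hcover, hcap⟩ := hfeas
  set Frac : Finset (StabIdx G Vset) :=
    Finset.univ.filter (fun p => ¬ ∃ z : ℤ, x p = (z : ℝ)) with hFracdef
  have hmemF : ∀ p : StabIdx G Vset, p ∈ Frac ↔ ¬ ∃ z : ℤ, x p = (z : ℝ) := by
    intro p; simp [hFracdef]
  obtain ⟨p₀, hp₀⟩ := hfrac
  have hp₀F : p₀ ∈ Frac := (hmemF p₀).2 hp₀
  haveI : Nonempty {p // p ∈ Frac} := ⟨⟨p₀, hp₀F⟩⟩
  have hcard1 : ∀ p ∈ Frac, p.1.1.card = 1 := by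
    intro p hp
    have h1 : 0 < p.1.1.card := Finset.card_pos.2 p.2.1
    by_contra h
    exact (hmemF p).1 hp (hcon p (by omega))
  have hsing : ∀ i : {p // p ∈ Frac}, ∃ v, i.1.1.1 = {v} :=
    fun i => Finset.card_eq_one.mp (hcard1 i.1 i.2)
  set r1 : {p // p ∈ Frac} → V := fun i => (hsing i).choose with hr1def
  have hr1 : ∀ i : {p // p ∈ Frac}, i.1.1.1 = {r1 i} := fun i => (hsing i).choose_spec
  have hmem1 : ∀ (i : {p // p ∈ Frac}) (v : V), v ∈ i.1.1.1 ↔ r1 i = v := by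
    intro i v; rw [hr1 i, Finset.mem_singleton]; exact eq_comm
  set r2 : {p // p ∈ Frac} → K := fun i => i.1.1.2 with hr2def
  -- tight & touched rows
  set A : Finset V := Finset.univ.filter (fun v =>
    (∑ p : StabIdx G Vset, if v ∈ p.1.1 then x p else 0) = 1 ∧
    ∃ q ∈ Frac, v ∈ q.1.1) with hAdef
  set B : Finset K := Finset.univ.filter (fun k =>
    (∑ p : StabIdx G Vset, if p.1.2 = k then x p else 0) = (m k : ℝ) ∧
    ∃ q ∈ Frac, q.1.2 = k) with hBdef
  -- degree conditions
  have hdegA : ∀ a ∈ A, 2 ≤ (Finset.univ.filter (fun i : {p // p ∈ Frac} => r1 i = a)).card := by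
    intro a ha
    rw [hAdef, Finset.mem_filter] at ha
    obtain ⟨-, htight, q, hqF, hqa⟩ := ha
    set t : Finset (StabIdx G Vset) := Frac.filter (fun p => a ∈ p.1.1) with htdef
    have hcardt : (Finset.univ.filter (fun i : {p // p ∈ Frac} => r1 i = a)).card = t.card := by
      refine Finset.card_bij (fun i _ => i.1) ?_ ?_ ?_
      · intro i hi
        rw [Finset.mem_filter] at hi
        exact Finset.mem_filter.2 ⟨i.2, (hmem1 i a).2 hi.2⟩
      · intro i _ j _ hij
        exact Subtype.ext hij
      · intro p hp
        rw [Finset.mem_filter] at hp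
        exact ⟨⟨p, hp.1⟩, Finset.mem_filter.2 ⟨Finset.mem_univ _, (hmem1 ⟨p, hp.1⟩ a).1 hp.2⟩, rfl⟩
    rw [hcardt]
    have htne : q ∈ t := Finset.mem_filter.2 ⟨hqF, hqa⟩
    have ht1 : t.card ≠ 1 := by
      intro h1
      obtain ⟨q', hq'⟩ := Finset.card_eq_one.mp h1
      set s : Finset (StabIdx G Vset) :=
        Finset.univ.filter (fun p => a ∈ p.1.1) with hsdef
      have hts : t = s.filter (fun p => p ∈ Frac) := by
        ext p
        simp only [htdef, hsdef, Finset.mem_filter, Finset.mem_univ, true_and]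
        tauto
      have hsumx : ∑ p ∈ s, x p = 1 := by
        rw [hsdef, Finset.sum_filter]
        exact htight
      have hsplit := Finset.sum_filter_add_sum_filter_not s (fun p => p ∈ Frac) x
      obtain ⟨z, hz⟩ := sum_int_aux (s.filter (fun p => p ∉ Frac)) x (by
        intro p hp
        rw [Finset.mem_filter] at hp
        have := hp.2
        rw [hmemF] at this
        exact not_not.mp this)
      have hxq' : x q' = ((1 - z : ℤ) : ℝ) := by
        have : ∑ p ∈ s.filter (fun p => p ∈ Frac), x p = x q' := by
          rw [← hts, hq', Finset.sum_singleton]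
        push_cast
        rw [← hsumx, ← hsplit, this, hz]
        ring
      have hq'F : q' ∈ Frac := by
        have : q' ∈ t := by rw [hq']; exact Finset.mem_singleton_self q'
        exact (Finset.mem_filter.1 (hts ▸ this)).2
      exact (hmemF q').1 hq'F ⟨1 - z, hxq'⟩
    have ht0 : t.card ≠ 0 := by
      intro h0
      rw [Finset.card_eq_zero] at h0
      rw [h0] at htne
      exact absurd htne (Finset.notMem_empty q)
    omega
  have hdegB : ∀ b ∈ B, 2 ≤ (Finset.univ.filter (fun i : {p // p ∈ Frac} => r2 i = b)).card := by
    intro b hb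
    rw [hBdef, Finset.mem_filter] at hb
    obtain ⟨-, htight, q, hqF, hqb⟩ := hb
    set t : Finset (StabIdx G Vset) := Frac.filter (fun p => p.1.2 = b) with htdef
    have hcardt : (Finset.univ.filter (fun i : {p // p ∈ Frac} => r2 i = b)).card = t.card := by
      refine Finset.card_bij (fun i _ => i.1) ?_ ?_ ?_
      · intro i hi
        rw [Finset.mem_filter] at hi
        exact Finset.mem_filter.2 ⟨i.2, hi.2⟩
      · intro i _ j _ hij
        exact Subtype.ext hij
      · intro p hp
        rw [Finset.mem_filter] at hp
        exact ⟨⟨p, hp.1⟩, Finset.mem_filter.2 ⟨Finset.mem_univ _, hp.2⟩, rfl⟩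
    rw [hcardt]
    have htne : q ∈ t := Finset.mem_filter.2 ⟨hqF, hqb⟩
    have ht1 : t.card ≠ 1 := by
      intro h1
      obtain ⟨q', hq'⟩ := Finset.card_eq_one.mp h1
      set s : Finset (StabIdx G Vset) :=
        Finset.univ.filter (fun p => p.1.2 = b) with hsdef
      have hts : t = s.filter (fun p => p ∈ Frac) := by
        ext p
        simp only [htdef, hsdef, Finset.mem_filter, Finset.mem_univ, true_and]
        tauto
      have hsumx : ∑ p ∈ s, x p = (m b : ℝ) := by
        rw [hsdef, Finset.sum_filter]
        exact htight
      have hsplit := Finset.sum_filter_add_sum_filter_not s (fun p => p ∈ Frac) x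
      obtain ⟨z, hz⟩ := sum_int_aux (s.filter (fun p => p ∉ Frac)) x (by
        intro p hp
        rw [Finset.mem_filter] at hp
        have := hp.2
        rw [hmemF] at this
        exact not_not.mp this)
      have hxq' : x q' = ((m b - z : ℤ) : ℝ) := by
        have : ∑ p ∈ s.filter (fun p => p ∈ Frac), x p = x q' := by
          rw [← hts, hq', Finset.sum_singleton]
        push_cast
        rw [← hsumx, ← hsplit, this, hz]
        ring
      have hq'F : q' ∈ Frac := by
        have : q' ∈ t := by rw [hq']; exact Finset.mem_singleton_self q'
        exact (Finset.mem_filter.1 (hts ▸ this)).2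
      exact (hmemF q').1 hq'F ⟨(m b : ℤ) - z, hxq'⟩
    have ht0 : t.card ≠ 0 := by
      intro h0
      rw [Finset.card_eq_zero] at h0
      rw [h0] at htne
      exact absurd htne (Finset.notMem_empty q)
    omega
  obtain ⟨d, hdne, hdA, hdB⟩ := exists_kernel_vec r1 r2 A B hdegA hdegB
  -- extend d to all indices
  set D : StabIdx G Vset → ℝ := fun p => if h : p ∈ Frac then d ⟨p, h⟩ else 0 with hDdef
  have hDfrac : ∀ p, p ∉ Frac → D p = 0 := by intro p hp; simp [hDdef, hp]
  have hDeq : ∀ i : {p // p ∈ Frac}, D i.1 = d i := by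
    intro i; simp [hDdef, i.2]
  -- row sums of D
  have hrowV : ∀ v : V, (∑ p : StabIdx G Vset, if v ∈ p.1.1 then D p else 0)
      = ∑ i : {p // p ∈ Frac}, if r1 i = v then d i else 0 := by
    intro v
    have h1 : (∑ p : StabIdx G Vset, if v ∈ p.1.1 then D p else 0)
        = ∑ p ∈ Frac, if v ∈ p.1.1 then D p else 0 := by
      refine (Finset.sum_subset (Finset.subset_univ _) ?_).symm
      intro p _ hp
      simp [hDfrac p hp]
    rw [h1, ← Finset.sum_coe_sort Frac (fun p => if v ∈ p.1.1 then D p else 0)]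
    refine Finset.sum_congr rfl fun i _ => ?_
    rw [hDeq i]
    exact if_congr (hmem1 i v) rfl rfl
  have hrowK : ∀ k : K, (∑ p : StabIdx G Vset, if p.1.2 = k then D p else 0)
      = ∑ i : {p // p ∈ Frac}, if r2 i = k then d i else 0 := by
    intro k
    have h1 : (∑ p : StabIdx G Vset, if p.1.2 = k then D p else 0)
        = ∑ p ∈ Frac, if p.1.2 = k then D p else 0 := by
      refine (Finset.sum_subset (Finset.subset_univ _) ?_).symm
      intro p _ hp
      simp [hDfrac p hp]
    rw [h1, ← Finset.sum_coe_sort Frac (fun p => if p.1.2 = k then D p else 0)]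
    refine Finset.sum_congr rfl fun i _ => ?_
    rw [hDeq i]
  -- zero sums on tight rows
  have hV0 : ∀ v : V, (∑ p : StabIdx G Vset, if v ∈ p.1.1 then x p else 0) = 1 →
      (∑ p : StabIdx G Vset, if v ∈ p.1.1 then D p else 0) = 0 := by
    intro v hv
    rw [hrowV]
    by_cases hvA : v ∈ A
    · exact hdA v hvA
    · have hnt : ¬ ∃ q ∈ Frac, v ∈ q.1.1 := by
        intro h
        exact hvA (by rw [hAdef]; exact Finset.mem_filter.2 ⟨Finset.mem_univ _, hv, h⟩)
      refine Finset.sum_eq_zero fun i _ => ?_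
      rw [if_neg]
      intro hr
      exact hnt ⟨i.1, i.2, (hmem1 i v).2 hr⟩
  have hK0 : ∀ k : K, (∑ p : StabIdx G Vset, if p.1.2 = k then x p else 0) = (m k : ℝ) →
      (∑ p : StabIdx G Vset, if p.1.2 = k then D p else 0) = 0 := by
    intro k hk
    rw [hrowK]
    by_cases hkB : k ∈ B
    · exact hdB k hkB
    · have hnt : ¬ ∃ q ∈ Frac, q.1.2 = k := by
        intro h
        exact hkB (by rw [hBdef]; exact Finset.mem_filter.2 ⟨Finset.mem_univ _, hk, h⟩)
      refine Finset.sum_eq_zero fun i _ => ?_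
      rw [if_neg]
      intro hr
      exact hnt ⟨i.1, i.2, hr⟩
  -- bound on D
  set M : ℝ := ∑ p : StabIdx G Vset, |D p| with hMdef
  have hDM : ∀ p, |D p| ≤ M :=
    fun p => Finset.single_le_sum (fun q _ => abs_nonneg (D q)) (Finset.mem_univ p)
  obtain ⟨i₁, hi₁⟩ : ∃ i, d i ≠ 0 := Function.ne_iff.1 hdne
  have hDi₁ : D i₁.1 ≠ 0 := by rw [hDeq i₁]; exact hi₁
  have hM0 : 0 < M := lt_of_lt_of_le (abs_pos.2 hDi₁) (hDM i₁.1)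
  have hrowbound : ∀ (P : StabIdx G Vset → Prop) [DecidablePred P],
      |∑ p : StabIdx G Vset, if P p then D p else 0| ≤ M := by
    intro P _
    calc |∑ p : StabIdx G Vset, if P p then D p else 0|
        ≤ ∑ p : StabIdx G Vset, |if P p then D p else 0| := Finset.abs_sum_le_sum_abs _ _
      _ ≤ M := Finset.sum_le_sum fun p _ => by
          by_cases h : P p <;> simp [h, abs_nonneg]
  -- minimal slack
  set T : Finset ℝ := Frac.image x ∪
    (Finset.univ.filter (fun v : V =>
      (∑ p : StabIdx G Vset, if v ∈ p.1.1 then x p else 0) ≠ 1)).image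
      (fun v => (∑ p : StabIdx G Vset, if v ∈ p.1.1 then x p else 0) - 1) ∪
    (Finset.univ.filter (fun k : K =>
      (∑ p : StabIdx G Vset, if p.1.2 = k then x p else 0) ≠ (m k : ℝ))).image
      (fun k => (m k : ℝ) - ∑ p : StabIdx G Vset, if p.1.2 = k then x p else 0) with hTdef
  have hTne : T.Nonempty := ⟨x p₀, by
    rw [hTdef]
    exact Finset.mem_union_left _ (Finset.mem_union_left _
      (Finset.mem_image.2 ⟨p₀, hp₀F, rfl⟩))⟩
  set c : ℝ := T.min' hTne with hcdef
  have hcle : ∀ y ∈ T, c ≤ y := fun y hy => Finset.min'_le T y hy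
  have hxpos : ∀ p ∈ Frac, 0 < x p := by
    intro p hp
    rcases lt_or_eq_of_le (hnn p) with h | h
    · exact h
    · exact absurd ⟨0, by rw [← h]; norm_num⟩ ((hmemF p).1 hp)
  have hcpos : 0 < c := by
    have hmem := T.min'_mem hTne
    rw [← hcdef] at hmem
    rw [hTdef] at hmem
    rcases Finset.mem_union.1 hmem with h | h
    · rcases Finset.mem_union.1 h with h | h
      · obtain ⟨p, hpF, hpx⟩ := Finset.mem_image.1 h
        rw [← hpx]
        exact hxpos p hpF
      · obtain ⟨v, hv, hvx⟩ := Finset.mem_image.1 h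
        rw [Finset.mem_filter] at hv
        have h1 := hcover v
        rw [← hvx]
        rcases lt_or_eq_of_le h1 with h2 | h2
        · linarith
        · exact absurd h2.symm hv.2
    · obtain ⟨k, hk, hkx⟩ := Finset.mem_image.1 h
      rw [Finset.mem_filter] at hk
      have h1 := hcap k
      rw [← hkx]
      rcases lt_or_eq_of_le h1 with h2 | h2
      · linarith
      · exact absurd h2 hk.2
  set ε : ℝ := c / M with hεdef
  have hε0 : 0 < ε := div_pos hcpos hM0
  -- both perturbations are feasible
  have hfeast : ∀ t : ℝ, |t| ≤ ε → (fun p => x p + t * D p) ∈ scFeas G Vset m := by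
    intro t ht
    have htc : ∀ (S : ℝ), |S| ≤ M → |t * S| ≤ c := by
      intro S hS
      calc |t * S| = |t| * |S| := abs_mul t S
        _ ≤ ε * M := by
            apply mul_le_mul ht hS (abs_nonneg S) (le_of_lt hε0)
        _ = c := by rw [hεdef]; field_simp
    refine ⟨?_, ?_, ?_⟩
    · intro p
      by_cases hD : D p = 0
      · simpa [hD] using hnn p
      · have hpF : p ∈ Frac := by
          by_contra hp
          exact hD (hDfrac p hp)
        have h1 : c ≤ x p := hcle (x p) (by
          rw [hTdef]
          exact Finset.mem_union_left _ (Finset.mem_union_left _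
            (Finset.mem_image.2 ⟨p, hpF, rfl⟩)))
        have h2 : |t * D p| ≤ c := htc (D p) (hDM p)
        have h3 := neg_abs_le (t * D p)
        simp only []
        linarith
    · intro v
      have hsplit : (∑ p : StabIdx G Vset, if v ∈ p.1.1 then x p + t * D p else 0)
          = (∑ p : StabIdx G Vset, if v ∈ p.1.1 then x p else 0)
            + t * (∑ p : StabIdx G Vset, if v ∈ p.1.1 then D p else 0) := by
        rw [Finset.mul_sum, ← Finset.sum_add_distrib]
        refine Finset.sum_congr rfl fun p _ => ?_
        by_cases h : v ∈ p.1.1 <;> simp [h]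
      rw [hsplit]
      by_cases htight : (∑ p : StabIdx G Vset, if v ∈ p.1.1 then x p else 0) = 1
      · rw [htight, hV0 v htight]
        simp
      · have h1 : c ≤ (∑ p : StabIdx G Vset, if v ∈ p.1.1 then x p else 0) - 1 :=
          hcle _ (by
            rw [hTdef]
            exact Finset.mem_union_left _ (Finset.mem_union_right _
              (Finset.mem_image.2 ⟨v, Finset.mem_filter.2 ⟨Finset.mem_univ _, htight⟩, rfl⟩)))
        have h2 : |t * (∑ p : StabIdx G Vset, if v ∈ p.1.1 then D p else 0)| ≤ c :=
          htc _ (hrowbound _)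
        have h3 := neg_abs_le (t * (∑ p : StabIdx G Vset, if v ∈ p.1.1 then D p else 0))
        linarith
    · intro k
      have hsplit : (∑ p : StabIdx G Vset, if p.1.2 = k then x p + t * D p else 0)
          = (∑ p : StabIdx G Vset, if p.1.2 = k then x p else 0)
            + t * (∑ p : StabIdx G Vset, if p.1.2 = k then D p else 0) := by
        rw [Finset.mul_sum, ← Finset.sum_add_distrib]
        refine Finset.sum_congr rfl fun p _ => ?_
        by_cases h : p.1.2 = k <;> simp [h]
      rw [hsplit]
      by_cases htight : (∑ p : StabIdx G Vset, if p.1.2 = k then x p else 0) = (m k : ℝ)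
      · rw [htight, hK0 k htight]
        simp
      · have h1 : c ≤ (m k : ℝ) - (∑ p : StabIdx G Vset, if p.1.2 = k then x p else 0) :=
          hcle _ (by
            rw [hTdef]
            exact Finset.mem_union_right _
              (Finset.mem_image.2 ⟨k, Finset.mem_filter.2 ⟨Finset.mem_univ _, htight⟩, rfl⟩))
        have h2 : |t * (∑ p : StabIdx G Vset, if p.1.2 = k then D p else 0)| ≤ c :=
          htc _ (hrowbound _)
        have h3 := le_abs_self (t * (∑ p : StabIdx G Vset, if p.1.2 = k then D p else 0))
        linarith
  have hy1 := hfeast ε (le_of_eq (abs_of_pos hε0))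
  have hy2 := hfeast (-ε) (by rw [abs_neg, abs_of_pos hε0])
  have hseg : x ∈ openSegment ℝ (fun p => x p + ε * D p) (fun p => x p + (-ε) * D p) := by
    refine ⟨1/2, 1/2, by norm_num, by norm_num, by norm_num, ?_⟩
    funext p
    simp only [Pi.add_apply, Pi.smul_apply, smul_eq_mul]
    ring
  obtain ⟨heq, -⟩ := (mem_extremePoints.1 hbasic).2 _ hy1 _ hy2 hseg
  have h := congrFun heq i₁.1
  have : ε * D i₁.1 = 0 := by linarith
  exact absurd this (mul_ne_zero (ne_of_gt hε0) hDi₁)
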